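/- Let P, R, S1, S2 be s×s real matrices, set Q̂ = R S1 and R̂ = R S2, let F0, F1 : ℝ^m → ℝ^m, and let u : ℝ → ℝ^m be differentiable with u'(t) = F0(u(t)) + F1(u(t)). Then for every Δt > 0 and n, the residual of the IMEX-Peer scheme, with components (r_n)_i = u(t_{n,i}) − Σ_j P_{ij} u(t_{n−1,j}) − Δt Σ_j Q̂_{ij} F0(u(t_{n−1,j})) − Δt Σ_j R̂_{ij} F0(u(t_{n,j})) − Δt Σ_j R_{ij} F1(u(t_{n,j})), satisfies the exact decomposition r_n = r_n^{im} + Δt R δ_n, where r_n^{im} is the residual of the implicit Peer method (P, R) applied with the full right-hand side F = F0 + F1, i.e. (r_n^{im})_i = u(t_{n,i}) − Σ_j P_{ij} u(t_{n−1,j}) − Δt Σ_j R_{ij} u'(t_{n,j}), and δ_n is the extrapolation error of φ(t) = F0(u(t)), i.e. (δ_n)_i = φ(t_{n,i}) − Σ_j (S1)_{ij} φ(t_{n−1,j}) − Σ_j (S2)_{ij} φ(t_{n,j}). -/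
import Mathlib


open Finset

/-- Exact decomposition of the IMEX-Peer residual:
`r_n = r_n^{im} + Δt R δ_n`, where `r_n^{im}` is the residual of the implicit Peer method
with `F = F0 + F1` and `δ_n` is the extrapolation error of `φ = F0 ∘ u`. -/
theorem stmt_8 (s m : ℕ)
    (P R S1 S2 Qh Rh : Matrix (Fin s) (Fin s) ℝ)
    (hQ : Qh = R * S1) (hRh : Rh = R * S2)
    (F0 F1 : EuclideanSpace ℝ (Fin m) → EuclideanSpace ℝ (Fin m))
    (u : ℝ → EuclideanSpace ℝ (Fin m)) (hu : Differentiable ℝ u)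
    (hode : ∀ t, deriv u t = F0 (u t) + F1 (u t))
    (c : Fin s → ℝ) (Δt : ℝ) (hΔt : 0 < Δt) (n : ℕ)
    (tn : ℝ) (htn : tn = (n : ℝ) * Δt)
    (r rim δ : Fin s → EuclideanSpace ℝ (Fin m))
    (hr : ∀ i, r i = u (tn + c i * Δt)
      - (∑ j, P i j • u (tn - Δt + c j * Δt))
      - Δt • (∑ j, Qh i j • F0 (u (tn - Δt + c j * Δt)))
      - Δt • (∑ j, Rh i j • F0 (u (tn + c j * Δt)))
      - Δt • (∑ j, R i j • F1 (u (tn + c j * Δt))))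
    (hrim : ∀ i, rim i = u (tn + c i * Δt)
      - (∑ j, P i j • u (tn - Δt + c j * Δt))
      - Δt • (∑ j, R i j • deriv u (tn + c j * Δt)))
    (hδ : ∀ i, δ i = F0 (u (tn + c i * Δt))
      - (∑ j, S1 i j • F0 (u (tn - Δt + c j * Δt)))
      - ∑ j, S2 i j • F0 (u (tn + c j * Δt))) :
    ∀ i, r i = rim i + Δt • ∑ j, R i j • δ j := by
  intro i
  simp only [hr, hrim, hδ, hQ, hRh, hode, Matrix.mul_apply, smul_sub, smul_add,
    Finset.smul_sum, Finset.sum_sub_distrib, Finset.sum_add_distrib, smul_smul, Finset.mul_sum,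
    Finset.sum_smul]
  rw [Finset.sum_comm (f := fun x x_1 => (Δt * (R i x_1 * S1 x_1 x)) • F0 (u (tn - Δt + c x * Δt))),
      Finset.sum_comm (f := fun x x_1 => (Δt * (R i x_1 * S2 x_1 x)) • F0 (u (tn + c x * Δt)))]
  abel
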